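/- Let P=(x₁,y₁) and Q=(x₂,y₂) be points on the generalized Hessian curve E such that the denominators in the sum and difference formulas are nonzero, and let (x₃,y₃)=P+Q and (x₄,y₄)=P−Q. Set r_P = x₁y₁ and r_Q = x₂y₂. If r_P ≠ r_Q, then (x₃y₃)·(x₄y₄) = (r_P²·r_Q² − a·d·r_P·r_Q + a²·r_Q + a²·r_P)/(r_Q − r_P)². -/

import Mathlib

/-- Differential addition for the degree-6 compression `f₆(x,y) = x·y` on the
generalized Hessian curve `x³ + y³ + a = d·x·y`. -/
theorem genHessian_deg6_diff_add {K : Type*} [Field K] (a d : K)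
    (hchar2 : (2 : K) ≠ 0) (hchar3 : (3 : K) ≠ 0)
    (ha : a ≠ 0) (hd : d ^ 3 ≠ 27 * a)
    (x1 y1 x2 y2 x3 y3 x4 y4 : K)
    (hP : x1 ^ 3 + y1 ^ 3 + a = d * x1 * y1)
    (hQ : x2 ^ 3 + y2 ^ 3 + a = d * x2 * y2)
    (hden1 : x1 * x2 ^ 2 - y2 * y1 ^ 2 ≠ 0)
    (hden2 : x1 * y2 ^ 2 - x2 * y1 ^ 2 ≠ 0)
    (hx3 : x3 = (a * y1 - x2 * y2 * x1 ^ 2) / (x1 * x2 ^ 2 - y2 * y1 ^ 2))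
    (hy3 : y3 = (x1 * y1 * y2 ^ 2 - a * x2) / (x1 * x2 ^ 2 - y2 * y1 ^ 2))
    (hx4 : x4 = (a * y1 - y2 * x2 * x1 ^ 2) / (x1 * y2 ^ 2 - x2 * y1 ^ 2))
    (hy4 : y4 = (x1 * y1 * x2 ^ 2 - a * y2) / (x1 * y2 ^ 2 - x2 * y1 ^ 2))
    (rP rQ : K) (hrP : rP = x1 * y1) (hrQ : rQ = x2 * y2)
    (hne : rP ≠ rQ) :
    (x3 * y3) * (x4 * y4) =
      (rP ^ 2 * rQ ^ 2 - a * d * rP * rQ + a ^ 2 * rQ + a ^ 2 * rP) / (rQ - rP) ^ 2 := by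
  subst hx3 hy3 hx4 hy4 hrP hrQ
  have hne2 : x2 * y2 - x1 * y1 ≠ 0 := sub_ne_zero.mpr hne.symm
  rw [div_mul_div_comm, div_mul_div_comm, div_mul_div_comm, div_eq_div_iff (mul_ne_zero (mul_ne_zero hden1 hden1) (mul_ne_zero hden2 hden2)) (pow_ne_zero 2 hne2)]
  linear_combination ((1)*a ^ 3*x1 ^ 2*y1 ^ 4*x2*y2 + (-2)*a ^ 3*x1*y1 ^ 3*x2 ^ 2*y2 ^ 2 + (1)*a ^ 3*y1 ^ 2*x2 ^ 3*y2 ^ 3 + (1)*a ^ 2*d*x1 ^ 3*y1 ^ 5*x2*y2 + (-2)*a ^ 2*d*x1 ^ 2*y1 ^ 4*x2 ^ 2*y2 ^ 2 + (1)*a ^ 2*d*x1*y1 ^ 3*x2 ^ 3*y2 ^ 3 + (-1)*a ^ 2*x1 ^ 5*y1 ^ 4*x2*y2 + (-1)*a ^ 2*x1 ^ 3*y1 ^ 5*x2 ^ 3 + (-1)*a ^ 2*x1 ^ 3*y1 ^ 5*y2 ^ 3 + (3)*a ^ 2*x1 ^ 3*y1 ^ 2*x2 ^ 3*y2 ^ 3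 + (-1)*a ^ 2*x1 ^ 2*y1 ^ 7*x2*y2 + (2)*a ^ 2*x1 ^ 2*y1 ^ 4*x2 ^ 4*y2 + (2)*a ^ 2*x1 ^ 2*y1 ^ 4*x2*y2 ^ 4 + (-2)*a ^ 2*x1 ^ 2*y1*x2 ^ 4*y2 ^ 4 + (2)*a ^ 2*x1*y1 ^ 6*x2 ^ 2*y2 ^ 2 + (-1)*a ^ 2*x1*y1 ^ 3*x2 ^ 5*y2 ^ 2 + (-1)*a ^ 2*x1*y1 ^ 3*x2 ^ 2*y2 ^ 5 + (-1)*a ^ 2*y1 ^ 5*x2 ^ 3*y2 ^ 3 + (1)*a*d ^ 2*x1 ^ 4*y1 ^ 6*x2*y2 + (-2)*a*d ^ 2*x1 ^ 3*y1 ^ 5*x2 ^ 2*y2 ^ 2 + (1)*a*d ^ 2*x1 ^ 2*y1 ^ 4*x2 ^ 3*y2 ^ 3 + (-2)*a*d*x1 ^ 6*y1 ^ 5*x2*y2 + (2)*a*d*x1 ^ 5*y1 ^ 4*x2 ^ 2*y2 ^ 2 + (-1)*a*d*x1 ^ 4*y1 ^ 6*x2 ^ 3 + (-1)*a*d*x1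 ^ 4*y1 ^ 6*y2 ^ 3 + (2)*a*d*x1 ^ 4*y1 ^ 3*x2 ^ 3*y2 ^ 3 + (-2)*a*d*x1 ^ 3*y1 ^ 8*x2*y2 + (2)*a*d*x1 ^ 3*y1 ^ 5*x2 ^ 4*y2 + (2)*a*d*x1 ^ 3*y1 ^ 5*x2*y2 ^ 4 + (-2)*a*d*x1 ^ 3*y1 ^ 2*x2 ^ 4*y2 ^ 4 + (4)*a*d*x1 ^ 2*y1 ^ 7*x2 ^ 2*y2 ^ 2 + (-1)*a*d*x1 ^ 2*y1 ^ 4*x2 ^ 5*y2 ^ 2 + (-1)*a*d*x1 ^ 2*y1 ^ 4*x2 ^ 2*y2 ^ 5 + (-2)*a*d*x1*y1 ^ 6*x2 ^ 3*y2 ^ 3 + (1)*a*x1 ^ 8*y1 ^ 4*x2*y2 + (1)*a*x1 ^ 6*y1 ^ 5*x2 ^ 3 + (1)*a*x1 ^ 6*y1 ^ 5*y2 ^ 3 + (-2)*a*x1 ^ 6*y1 ^ 2*x2 ^ 3*y2 ^ 3 + (2)*a*x1 ^ 5*y1 ^ 7*x2*y2 + (-1)*a*x1 ^ 5*y1*x2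 ^ 4*y2 ^ 4 + (-1)*a*x1 ^ 4*y1 ^ 6*x2 ^ 2*y2 ^ 2 + (-1)*a*x1 ^ 4*y1 ^ 3*x2 ^ 5*y2 ^ 2 + (-1)*a*x1 ^ 4*y1 ^ 3*x2 ^ 2*y2 ^ 5 + (1)*a*x1 ^ 3*y1 ^ 8*x2 ^ 3 + (1)*a*x1 ^ 3*y1 ^ 8*y2 ^ 3 + (-1)*a*x1 ^ 3*y1 ^ 5*x2 ^ 6 + (-8)*a*x1 ^ 3*y1 ^ 5*x2 ^ 3*y2 ^ 3 + (-1)*a*x1 ^ 3*y1 ^ 5*y2 ^ 6 + (4)*a*x1 ^ 3*y1 ^ 2*x2 ^ 6*y2 ^ 3 + (4)*a*x1 ^ 3*y1 ^ 2*x2 ^ 3*y2 ^ 6 + (1)*a*x1 ^ 2*y1 ^ 10*x2*y2 + (-1)*a*x1 ^ 2*y1 ^ 4*x2 ^ 7*y2 + (-1)*a*x1 ^ 2*y1 ^ 4*x2 ^ 4*y2 ^ 4 + (-1)*a*x1 ^ 2*y1 ^ 4*x2*y2 ^ 7 + (-3)*a*x1*y1 ^ 9*x2 ^ 2*y2 ^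 2 + (3)*a*x1*y1 ^ 6*x2 ^ 5*y2 ^ 2 + (3)*a*x1*y1 ^ 6*x2 ^ 2*y2 ^ 5 + (-1)*d ^ 3*x1 ^ 4*y1 ^ 6*x2 ^ 2*y2 ^ 2 + (1)*d ^ 3*x1 ^ 3*y1 ^ 5*x2 ^ 3*y2 ^ 3 + (2)*d ^ 2*x1 ^ 6*y1 ^ 5*x2 ^ 2*y2 ^ 2 + (-1)*d ^ 2*x1 ^ 5*y1 ^ 4*x2 ^ 3*y2 ^ 3 + (2)*d ^ 2*x1 ^ 4*y1 ^ 6*x2 ^ 4*y2 + (2)*d ^ 2*x1 ^ 4*y1 ^ 6*x2*y2 ^ 4 + (-2)*d ^ 2*x1 ^ 4*y1 ^ 3*x2 ^ 4*y2 ^ 4 + (2)*d ^ 2*x1 ^ 3*y1 ^ 8*x2 ^ 2*y2 ^ 2 + (-1)*d ^ 2*x1 ^ 3*y1 ^ 5*x2 ^ 5*y2 ^ 2 + (-1)*d ^ 2*x1 ^ 3*y1 ^ 5*x2 ^ 2*y2 ^ 5 + (-3)*d ^ 2*x1 ^ 2*y1 ^ 7*x2 ^ 3*y2 ^ 3 +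 (-1)*d*x1 ^ 8*y1 ^ 4*x2 ^ 2*y2 ^ 2 + (-3)*d*x1 ^ 6*y1 ^ 5*x2 ^ 4*y2 + (-3)*d*x1 ^ 6*y1 ^ 5*x2*y2 ^ 4 + (2)*d*x1 ^ 6*y1 ^ 2*x2 ^ 4*y2 ^ 4 + (-2)*d*x1 ^ 5*y1 ^ 7*x2 ^ 2*y2 ^ 2 + (1)*d*x1 ^ 5*y1*x2 ^ 5*y2 ^ 5 + (-1)*d*x1 ^ 4*y1 ^ 6*x2 ^ 6 + (-1)*d*x1 ^ 4*y1 ^ 6*x2 ^ 3*y2 ^ 3 + (-1)*d*x1 ^ 4*y1 ^ 6*y2 ^ 6 + (2)*d*x1 ^ 4*y1 ^ 3*x2 ^ 6*y2 ^ 3 + (2)*d*x1 ^ 4*y1 ^ 3*x2 ^ 3*y2 ^ 6 + (-3)*d*x1 ^ 3*y1 ^ 8*x2 ^ 4*y2 + (-3)*d*x1 ^ 3*y1 ^ 8*x2*y2 ^ 4 + (5)*d*x1 ^ 3*y1 ^ 5*x2 ^ 4*y2 ^ 4 + (-1)*d*x1 ^ 2*y1 ^ 10*x2 ^ 2*y2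 ^ 2 + (2)*d*x1 ^ 2*y1 ^ 7*x2 ^ 5*y2 ^ 2 + (2)*d*x1 ^ 2*y1 ^ 7*x2 ^ 2*y2 ^ 5 + (3)*d*x1*y1 ^ 9*x2 ^ 3*y2 ^ 3 + (1)*x1 ^ 8*y1 ^ 4*x2 ^ 4*y2 + (1)*x1 ^ 8*y1 ^ 4*x2*y2 ^ 4 + (1)*x1 ^ 6*y1 ^ 5*x2 ^ 6 + (2)*x1 ^ 6*y1 ^ 5*x2 ^ 3*y2 ^ 3 + (1)*x1 ^ 6*y1 ^ 5*y2 ^ 6 + (-2)*x1 ^ 6*y1 ^ 2*x2 ^ 6*y2 ^ 3 + (-2)*x1 ^ 6*y1 ^ 2*x2 ^ 3*y2 ^ 6 + (2)*x1 ^ 5*y1 ^ 7*x2 ^ 4*y2 + (2)*x1 ^ 5*y1 ^ 7*x2*y2 ^ 4 + (1)*x1 ^ 5*y1 ^ 4*x2 ^ 7*y2 + (3)*x1 ^ 5*y1 ^ 4*x2 ^ 4*y2 ^ 4 + (1)*x1 ^ 5*y1 ^ 4*x2*y2 ^ 7 + (-1)*x1 ^ 5*y1*x2 ^ 7*y2 ^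 4 + (-1)*x1 ^ 5*y1*x2 ^ 4*y2 ^ 7 + (-1)*x1 ^ 4*y1 ^ 6*x2 ^ 5*y2 ^ 2 + (-1)*x1 ^ 4*y1 ^ 6*x2 ^ 2*y2 ^ 5 + (-2)*x1 ^ 4*y1 ^ 3*x2 ^ 5*y2 ^ 5 + (1)*x1 ^ 3*y1 ^ 8*x2 ^ 6 + (2)*x1 ^ 3*y1 ^ 8*x2 ^ 3*y2 ^ 3 + (1)*x1 ^ 3*y1 ^ 8*y2 ^ 6 + (-4)*x1 ^ 3*y1 ^ 5*x2 ^ 6*y2 ^ 3 + (-4)*x1 ^ 3*y1 ^ 5*x2 ^ 3*y2 ^ 6 + (1)*x1 ^ 2*y1 ^ 10*x2 ^ 4*y2 + (1)*x1 ^ 2*y1 ^ 10*x2*y2 ^ 4 + (1)*x1 ^ 2*y1 ^ 7*x2 ^ 7*y2 + (1)*x1 ^ 2*y1 ^ 7*x2 ^ 4*y2 ^ 4 + (1)*x1 ^ 2*y1 ^ 7*x2*y2 ^ 7 + (-3)*x1*y1 ^ 9*x2 ^ 5*y2 ^ 2 + (-3)*x1*y1 ^ 9*x2 ^ 2*y2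 ^ 5) * hP + ((1)*d ^ 3*x1 ^ 5*y1 ^ 7*x2*y2 + (-1)*d ^ 3*x1 ^ 4*y1 ^ 6*x2 ^ 2*y2 ^ 2 + (-3)*d ^ 2*x1 ^ 7*y1 ^ 6*x2*y2 + (2)*d ^ 2*x1 ^ 6*y1 ^ 5*x2 ^ 2*y2 ^ 2 + (-1)*d ^ 2*x1 ^ 5*y1 ^ 7*x2 ^ 3 + (-1)*d ^ 2*x1 ^ 5*y1 ^ 7*y2 ^ 3 + (2)*d ^ 2*x1 ^ 5*y1 ^ 4*x2 ^ 3*y2 ^ 3 + (-3)*d ^ 2*x1 ^ 4*y1 ^ 9*x2*y2 + (4)*d ^ 2*x1 ^ 3*y1 ^ 8*x2 ^ 2*y2 ^ 2 + (3)*d*x1 ^ 9*y1 ^ 5*x2*y2 + (-1)*d*x1 ^ 8*y1 ^ 4*x2 ^ 2*y2 ^ 2 + (2)*d*x1 ^ 7*y1 ^ 6*x2 ^ 3 + (2)*d*x1 ^ 7*y1 ^ 6*y2 ^ 3 + (-4)*d*x1 ^ 7*y1 ^ 3*x2 ^ 3*y2 ^ 3 + (6)*d*x1 ^ 6*y1 ^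 8*x2*y2 + (1)*d*x1 ^ 6*y1 ^ 5*x2 ^ 4*y2 + (1)*d*x1 ^ 6*y1 ^ 5*x2*y2 ^ 4 + (-1)*d*x1 ^ 6*y1 ^ 2*x2 ^ 4*y2 ^ 4 + (-5)*d*x1 ^ 5*y1 ^ 7*x2 ^ 2*y2 ^ 2 + (2)*d*x1 ^ 4*y1 ^ 9*x2 ^ 3 + (2)*d*x1 ^ 4*y1 ^ 9*y2 ^ 3 + (-7)*d*x1 ^ 4*y1 ^ 6*x2 ^ 3*y2 ^ 3 + (3)*d*x1 ^ 3*y1 ^ 11*x2*y2 + (1)*d*x1 ^ 3*y1 ^ 8*x2 ^ 4*y2 + (1)*d*x1 ^ 3*y1 ^ 8*x2*y2 ^ 4 + (-6)*d*x1 ^ 2*y1 ^ 10*x2 ^ 2*y2 ^ 2 + (-1)*x1 ^ 11*y1 ^ 4*x2*y2 + (-1)*x1 ^ 9*y1 ^ 5*x2 ^ 3 + (-1)*x1 ^ 9*y1 ^ 5*y2 ^ 3 + (2)*x1 ^ 9*y1 ^ 2*x2 ^ 3*y2 ^ 3 + (-3)*x1 ^ 8*y1 ^ 7*x2*y2 +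 (-1)*x1 ^ 8*y1 ^ 4*x2 ^ 4*y2 + (-1)*x1 ^ 8*y1 ^ 4*x2*y2 ^ 4 + (1)*x1 ^ 8*y1*x2 ^ 4*y2 ^ 4 + (1)*x1 ^ 7*y1 ^ 6*x2 ^ 2*y2 ^ 2 + (-2)*x1 ^ 6*y1 ^ 8*x2 ^ 3 + (-2)*x1 ^ 6*y1 ^ 8*y2 ^ 3 + (6)*x1 ^ 6*y1 ^ 5*x2 ^ 3*y2 ^ 3 + (-3)*x1 ^ 5*y1 ^ 10*x2*y2 + (-2)*x1 ^ 5*y1 ^ 7*x2 ^ 4*y2 + (-2)*x1 ^ 5*y1 ^ 7*x2*y2 ^ 4 + (3)*x1 ^ 5*y1 ^ 4*x2 ^ 4*y2 ^ 4 + (4)*x1 ^ 4*y1 ^ 9*x2 ^ 2*y2 ^ 2 + (-1)*x1 ^ 4*y1 ^ 6*x2 ^ 5*y2 ^ 2 + (-1)*x1 ^ 4*y1 ^ 6*x2 ^ 2*y2 ^ 5 + (-1)*x1 ^ 3*y1 ^ 11*x2 ^ 3 + (-1)*x1 ^ 3*y1 ^ 11*y2 ^ 3 + (6)*x1 ^ 3*y1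 ^ 8*x2 ^ 3*y2 ^ 3 + (-1)*x1 ^ 2*y1 ^ 13*x2*y2 + (-1)*x1 ^ 2*y1 ^ 10*x2 ^ 4*y2 + (-1)*x1 ^ 2*y1 ^ 10*x2*y2 ^ 4 + (3)*x1*y1 ^ 12*x2 ^ 2*y2 ^ 2) * hQ
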